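/- Let x be a random vector in ℝ^n whose coordinates are independent Gaussian random variables, each with mean μᵢ and variance σ² > 0 (i.e. x ~ N(μ, σ²·I)), and set r = √n · σ. Then for every ε ≥ 0, P( r·√(1 − 2√ε) ≤ ‖x − μ‖ ≤ r·√(1 + 2√ε + 2ε) ) ≥ 1 − 2e^{−nε}. (When 1 − 2√ε < 0, the lower endpoint is interpreted as 0.) -/

import Mathlib

open MeasureTheory ProbabilityTheory
open Real
open scoped NNReal ENNReal

section AuxLemmas

lemma two_log_le {r : ℝ} (hr : 1 ≤ r) : 2 * Real.log r ≤ r - r⁻¹ := by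
  have key : ∀ x ∈ Set.Ici (1:ℝ),
      HasDerivAt (fun x : ℝ => x - x⁻¹ - 2 * Real.log x) ((1 - x⁻¹)^2) x := by
    intro x hx
    have hx0 : x ≠ 0 := by intro h; rw [h] at hx; simp at hx; linarith [hx]
    have h1 : HasDerivAt (fun x : ℝ => x) 1 x := hasDerivAt_id x
    have h2 : HasDerivAt (fun x : ℝ => x⁻¹) (-(x^2)⁻¹) x := hasDerivAt_inv hx0
    have h3 : HasDerivAt Real.log x⁻¹ x := Real.hasDerivAt_log hx0
    have h : HasDerivAt (fun x : ℝ => x - x⁻¹ - 2 * Real.log x) _ x := (h1.sub h2).sub (h3.const_mul 2)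
    convert h using 1
    have : x⁻¹ * x = 1 := inv_mul_cancel₀ hx0
    field_simp
    ring
  have mono : MonotoneOn (fun x : ℝ => x - x⁻¹ - 2 * Real.log x) (Set.Ici 1) := by
    apply monotoneOn_of_deriv_nonneg (convex_Ici 1)
    · exact fun x hx => (key x hx).continuousAt.continuousWithinAt
    · intro x hx
      rw [interior_Ici] at hx
      exact (key x (Set.mem_Ici.mpr (le_of_lt hx))).differentiableAt.differentiableWithinAt
    · intro x hx
      rw [interior_Ici] at hx
      rw [(key x (Set.mem_Ici.mpr (le_of_lt hx))).deriv]
      positivity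
  have h1 : (1:ℝ) ∈ Set.Ici (1:ℝ) := Set.mem_Ici.mpr le_rfl
  have := mono h1  (Set.mem_Ici.mpr hr) hr
  simp [Real.log_one] at this
  linarith

lemma log_one_sub_le {u : ℝ} (h0 : 0 ≤ u) (h1 : u < 1) :
    Real.log (1 - u) ≤ -u - u^2/2 := by
  have hs := Real.hasSum_pow_div_log_of_abs_lt_one (x := u) (by rwa [abs_of_nonneg h0])
  have h2 : ∑ i ∈ Finset.range 2, u^(i+1)/(i+1) ≤ -Real.log (1-u) :=
    sum_le_hasSum _ (fun i _ => by positivity) hs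
  simp [Finset.sum_range_succ] at h2
  linarith

lemma integral_pi_prod {n : ℕ} (ν : Fin n → Measure ℝ)
    (hs : ∀ i, IsProbabilityMeasure (ν i)) (f : Fin n → ℝ → ℝ) :
    ∫ x : Fin n → ℝ, ∏ i, f i (x i) ∂(Measure.pi ν) = ∏ i, ∫ y, f i y ∂(ν i) := by
  haveI : ∀ i, SigmaFinite (ν i) := fun i => by haveI := hs i; infer_instance
  have := MeasureTheory.integral_fintype_prod_eq_prod (𝕜 := ℝ) (ι := Fin n) (E := fun _ => ℝ) f
      (μ := ν)
  exact this

lemma integrable_pi_prod {n : ℕ} (ν : Fin n → Measure ℝ)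
    (hs : ∀ i, IsProbabilityMeasure (ν i)) (f : Fin n → ℝ → ℝ)
    (hf : ∀ i, Integrable (f i) (ν i)) :
    Integrable (fun x : Fin n → ℝ => ∏ i, f i (x i)) (Measure.pi ν) := by
  haveI : ∀ i, SigmaFinite (ν i) := fun i => by haveI := hs i; infer_instance
  have := MeasureTheory.Integrable.fintype_prod_dep (𝕜 := ℝ) (ι := Fin n) (E := fun _ => ℝ) (f := f)
      (μ := ν) (fun i => hf i)
  exact this

lemma gauss_exp {σ : ℝ} (hσ : 0 < σ) (m c : ℝ) (hc : 2*c*σ^2 < 1) :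
    Integrable (fun y => Real.exp (c * (y - m)^2)) (gaussianReal m ⟨σ^2, sq_nonneg σ⟩) ∧
    ∫ y, Real.exp (c * (y - m)^2) ∂(gaussianReal m ⟨σ^2, sq_nonneg σ⟩)
      = (Real.sqrt (1 - 2*c*σ^2))⁻¹ := by
  have hσ2 : (0:ℝ) < σ^2 := by positivity
  set v : ℝ≥0 := ⟨σ^2, sq_nonneg σ⟩ with hv_def
  have hv : v ≠ 0 := by
    intro h
    have : (v : ℝ) = 0 := by rw [h]; simp
    rw [hv_def] at this
    exact hσ2.ne' this
  have hb : 0 < 1/(2*σ^2) - c := by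
    have h2 : (0:ℝ) < 2*σ^2 := by positivity
    rw [sub_pos, lt_div_iff₀ h2]
    linarith
  have hcoe : ((v : ℝ)) = σ^2 := rfl
  have pointwise : ∀ y : ℝ, (gaussianPDFReal m v y) * Real.exp (c * (y - m)^2)
      = (Real.sqrt (2*π*σ^2))⁻¹ * Real.exp (-(1/(2*σ^2) - c) * (y-m)^2) := by
    intro y
    rw [gaussianPDFReal, hcoe, mul_assoc, ← Real.exp_add]
    congr 1
    ring
  have hmeas : Measurable (fun y => (gaussianPDFReal m v y).toNNReal) :=
    (measurable_gaussianPDFReal m v).real_toNNReal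
  have hrep : gaussianReal m v
      = volume.withDensity (fun y => ((gaussianPDFReal m v y).toNNReal : ℝ≥0∞)) :=
    gaussianReal_of_var_ne_zero m hv
  have base : Integrable (fun y : ℝ => Real.exp (-(1/(2*σ^2) - c) * (y-m)^2)) volume := by
    have := integrable_exp_neg_mul_sq hb
    exact this.comp_sub_right m
  have hfun : (fun y => ((gaussianPDFReal m v y).toNNReal : ℝ) * Real.exp (c*(y-m)^2))
      = fun y => (Real.sqrt (2*π*σ^2))⁻¹ * Real.exp (-(1/(2*σ^2) - c)*(y-m)^2) :=
    funext fun y => by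
      rw [Real.coe_toNNReal _ (gaussianPDFReal_nonneg m v y), pointwise y]
  constructor
  · rw [hrep, integrable_withDensity_iff_integrable_smul hmeas]
    simp only [NNReal.smul_def, smul_eq_mul]
    rw [hfun]
    exact base.const_mul _
  · rw [hrep, integral_withDensity_eq_integral_smul hmeas]
    simp only [NNReal.smul_def, smul_eq_mul]
    rw [hfun]
    rw [integral_const_mul]
    have : ∫ y : ℝ, Real.exp (-(1/(2*σ^2) - c)*(y-m)^2)
        = ∫ y : ℝ, Real.exp (-(1/(2*σ^2) - c)*y^2) :=
      integral_sub_right_eq_self (fun y => Real.exp (-(1/(2*σ^2) - c)*y^2)) m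
    rw [this, integral_gaussian]
    rw [← Real.sqrt_inv (2*π*σ^2), ← Real.sqrt_inv (1 - 2*c*σ^2),
      ← Real.sqrt_mul (by positivity : (0:ℝ) ≤ (2*π*σ^2)⁻¹)]
    congr 1
    have hne : (1:ℝ) - 2*c*σ^2 ≠ 0 := by nlinarith
    have hb' : (1:ℝ)/(2*σ^2) - c ≠ 0 := ne_of_gt hb
    have hden : π * σ ^ 2 * 2 - π * σ ^ 4 * c * 4 ≠ 0 := by
      have : π * σ ^ 2 * 2 - π * σ ^ 4 * c * 4 = (2*π*σ^2) * (1 - 2*c*σ^2) := by ring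
      rw [this]
      exact mul_ne_zero (by positivity) hne
    field_simp [hne, hb', hden, Real.pi_ne_zero]

end AuxLemmas

/-- The isotropic Gaussian measure `N(μ, σ²·I)` on `Fin n → ℝ`: the product of `n` independent
one-dimensional Gaussians with means `μ i` and common variance `σ²`. -/
noncomputable def isoGaussian (n : ℕ) (μ : Fin n → ℝ) (σ : ℝ) : Measure (Fin n → ℝ) :=
  Measure.pi fun i => gaussianReal (μ i) ⟨σ ^ 2, sq_nonneg σ⟩

set_option maxHeartbeats 2000000

/-- Two-sided concentration for an isotropic Gaussian: for `x ~ N(μ, σ²·I)`, `r = √n·σ` and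
`ε ≥ 0`, `P(r·√(1 - 2√ε) ≤ ‖x - μ‖ ≤ r·√(1 + 2√ε + 2ε)) ≥ 1 - 2e^(-nε)`.
(`Real.sqrt` of a negative number is `0`, so the lower endpoint is interpreted as `0`
when `1 - 2√ε < 0`.) -/
theorem isoGaussian_concentration {n : ℕ} (μ : Fin n → ℝ) (σ : ℝ) (hσ : 0 < σ)
    (ε : ℝ) (hε : 0 ≤ ε) :
    ENNReal.ofReal (1 - 2 * Real.exp (-(n * ε)))
      ≤ isoGaussian n μ σ
          {x | Real.sqrt n * σ * Real.sqrt (1 - 2 * Real.sqrt ε)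
                 ≤ Real.sqrt (∑ i, (x i - μ i) ^ 2) ∧
               Real.sqrt (∑ i, (x i - μ i) ^ 2)
                 ≤ Real.sqrt n * σ * Real.sqrt (1 + 2 * Real.sqrt ε + 2 * ε)} := by
  classical
  have hσ2 : (0:ℝ) < σ^2 := by positivity
  set s : ℝ := Real.sqrt ε with hs_def
  have hs0 : 0 ≤ s := Real.sqrt_nonneg ε
  have hse : s^2 = ε := Real.sq_sqrt hε
  set P := isoGaussian n μ σ with hP_def
  haveI hPprob : IsProbabilityMeasure P := by
    rw [hP_def]; unfold isoGaussian
    have := fun i : Fin n => instIsProbabilityMeasureGaussianReal (μ i) ⟨σ ^ 2, sq_nonneg σ⟩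
    infer_instance
  let Z : (Fin n → ℝ) → ℝ := fun x => ∑ i, (x i - μ i)^2
  set c₁ := Real.sqrt n * σ * Real.sqrt (1 - 2*s) with hc₁
  set c₂ := Real.sqrt n * σ * Real.sqrt (1 + 2*s + 2*ε) with hc₂
  change _ ≤ P {x | c₁ ≤ Real.sqrt (Z x) ∧ Real.sqrt (Z x) ≤ c₂}
  set S := {x : Fin n → ℝ | c₁ ≤ Real.sqrt (Z x) ∧ Real.sqrt (Z x) ≤ c₂} with hS_def
  have hZm : Measurable Z := by
    apply Finset.measurable_sum
    intro i _
    exact ((measurable_pi_apply i).sub measurable_const).pow_const 2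
  have hZ0 : ∀ x, 0 ≤ Z x := fun x => Finset.sum_nonneg fun i _ => sq_nonneg _
  -- mgf of Z
  have hmgf : ∀ t : ℝ, 2*t*σ^2 < 1 →
      Integrable (fun x => Real.exp (t * Z x)) P ∧
      ∫ x, Real.exp (t * Z x) ∂P = ((Real.sqrt (1 - 2*t*σ^2))⁻¹)^n := by
    intro t ht
    have hco := fun (i : Fin n) => gauss_exp hσ (μ i) t ht
    have hrw : (fun x : Fin n → ℝ => Real.exp (t * Z x))
        = fun x => ∏ i, Real.exp (t * (x i - μ i)^2) := by
      funext x
      rw [show t * Z x = ∑ i, t * (x i - μ i)^2 from Finset.mul_sum _ _ _, Real.exp_sum]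
    constructor
    · rw [hrw, hP_def]
      unfold isoGaussian
      exact integrable_pi_prod _ (fun i => instIsProbabilityMeasureGaussianReal _ _) _ (fun i => (hco i).1)
    · rw [hrw, hP_def]
      unfold isoGaussian
      refine Eq.trans (integral_pi_prod (fun i => gaussianReal (μ i) ⟨σ^2, sq_nonneg σ⟩)
        (fun i => instIsProbabilityMeasureGaussianReal _ _) (fun i y => Real.exp (t * (y - μ i)^2))) ?_
      rw [Finset.prod_congr rfl (fun i _ => (hco i).2), Finset.prod_const,
        Finset.card_univ, Fintype.card_fin]
  -- Chernoff bounds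
  have chern_up : ∀ t b' : ℝ, 0 ≤ t → 2*t*σ^2 < 1 →
      (P {x | b' ≤ Z x}).toReal
        ≤ Real.exp (-t*b') * ((Real.sqrt (1 - 2*t*σ^2))⁻¹)^n := by
    intro t b' ht h2
    have h := measure_ge_le_exp_mul_mgf (X := Z) (μ := P) b' ht (hmgf t h2).1
    have hm : mgf Z P t = ∫ x, Real.exp (t * Z x) ∂P := rfl
    rw [hm, (hmgf t h2).2] at h
    exact h
  have chern_low : ∀ t a' : ℝ, t ≤ 0 → 2*t*σ^2 < 1 →
      (P {x | Z x ≤ a'}).toReal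
        ≤ Real.exp (-t*a') * ((Real.sqrt (1 - 2*t*σ^2))⁻¹)^n := by
    intro t a' ht h2
    have h := measure_le_le_exp_mul_mgf (X := Z) (μ := P) a' ht (hmgf t h2).1
    have hm : mgf Z P t = ∫ x, Real.exp (t * Z x) ∂P := rfl
    rw [hm, (hmgf t h2).2] at h
    exact h
  set a := (n:ℝ) * σ^2 * (1 - 2*s) with ha_def
  set b := (n:ℝ) * σ^2 * (1 + 2*s + 2*ε) with hb_def
  have hnn : (0:ℝ) ≤ (n:ℝ) := Nat.cast_nonneg n
  have hsa : c₁ = Real.sqrt a := by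
    rw [hc₁, ha_def, Real.sqrt_mul (by positivity : (0:ℝ) ≤ (n:ℝ)*σ^2),
      Real.sqrt_mul hnn, Real.sqrt_sq hσ.le]
  have hsb : c₂ = Real.sqrt b := by
    rw [hc₂, hb_def, Real.sqrt_mul (by positivity : (0:ℝ) ≤ (n:ℝ)*σ^2),
      Real.sqrt_mul hnn, Real.sqrt_sq hσ.le]
  have hSm : MeasurableSet S := by
    have hm : Measurable fun x => Real.sqrt (Z x) := Real.continuous_sqrt.measurable.comp hZm
    exact (measurableSet_le measurable_const hm).inter (measurableSet_le hm measurable_const)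
  have h1p : (0:ℝ) < 1 + 2*s := by linarith
  -- complement inclusion
  have hcompl : Sᶜ ⊆ {x | Real.sqrt (Z x) < c₁} ∪ {x | b ≤ Z x} := by
    intro x hx
    simp only [hS_def, Set.mem_compl_iff, Set.mem_setOf_eq, not_and_or, not_le] at hx
    rcases hx with h | h
    · exact Or.inl h
    · right
      by_contra hbz
      simp only [Set.mem_setOf_eq, not_le] at hbz
      have h2 := Real.sqrt_le_sqrt hbz.le
      rw [← hsb] at h2
      exact absurd h2 (not_le.mpr h)
  -- upper tail
  have hU : P {x | b ≤ Z x} ≤ ENNReal.ofReal (Real.exp (-((n:ℝ)*ε))) := by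
    set t := s / (σ^2 * (1+2*s)) with ht_def
    have hts : 0 ≤ t := div_nonneg hs0 (by positivity)
    have h2t : 2*t*σ^2 = 2*s/(1+2*s) := by
      rw [ht_def]; field_simp
    have h2t' : 2*t*σ^2 < 1 := by
      rw [h2t, div_lt_one h1p]; linarith
    have hw : 1 - 2*t*σ^2 = (1+2*s)⁻¹ := by
      rw [h2t]
      field_simp [h1p.ne']
      ring
    rw [ENNReal.le_ofReal_iff_toReal_le (measure_ne_top P _) (Real.exp_nonneg _)]
    refine (chern_up t b hts h2t').trans ?_
    rw [hw, Real.sqrt_inv, inv_inv]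
    set r := Real.sqrt (1+2*s) with hr_def
    have hrpos : 0 < r := Real.sqrt_pos.mpr h1p
    have hr2 : r^2 = 1+2*s := Real.sq_sqrt h1p.le
    have hr1 : 1 ≤ r := by nlinarith
    have hrle : r ≤ 1 + s := by nlinarith
    set L := Real.log (1+2*s) with hL_def
    have hL0 : 0 ≤ L := Real.log_nonneg (by linarith)
    have hlogr : Real.log r = L / 2 := by
      rw [hr_def, Real.log_sqrt h1p.le, hL_def]
    have hLle : L ≤ r - r⁻¹ := by
      have h := two_log_le hr1
      linarith
    have hLr : L * r ≤ 2*s := by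
      have hinv : r⁻¹ * r = 1 := inv_mul_cancel₀ hrpos.ne'
      nlinarith [mul_le_mul_of_nonneg_right hLle hrpos.le]
    have hsrt : r = Real.exp (L / 2) := by
      rw [← hlogr, Real.exp_log hrpos]
    rw [hsrt, ← Real.exp_nat_mul, ← Real.exp_add, Real.exp_le_exp]
    have htb : -t*b = -((n:ℝ) * (s*(1+2*s+2*ε)/(1+2*s))) := by
      rw [ht_def, hb_def]
      field_simp
    have key : L/2 ≤ s*(1+2*s+2*ε)/(1+2*s) - ε := by
      rw [← hse]
      rw [show s*(1+2*s+2*s^2)/(1+2*s) - s^2 = s*(1+s)/(1+2*s) by field_simp; ring]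
      rw [div_le_div_iff₀ (by norm_num) h1p]
      nlinarith [mul_le_mul_of_nonneg_right hLr hrpos.le,
        mul_le_mul_of_nonneg_left hrle (mul_nonneg (by norm_num : (0:ℝ) ≤ 2) hs0)]
    have hmul := mul_le_mul_of_nonneg_left key hnn
    rw [htb]
    nlinarith [hmul]
  -- lower tail
  have hL : P {x | Real.sqrt (Z x) < c₁} ≤ ENNReal.ofReal (Real.exp (-((n:ℝ)*ε))) := by
    rcases lt_or_ge (2*s) 1 with hhalf | hhalf
    · -- s < 1/2
      have h1m : (0:ℝ) < 1 - 2*s := by linarith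
      have hsub : {x | Real.sqrt (Z x) < c₁} ⊆ {x | Z x ≤ a} := by
        intro x hx
        simp only [Set.mem_setOf_eq] at hx ⊢
        by_contra hza
        push_neg at hza
        have h2 := Real.sqrt_le_sqrt hza.le
        rw [← hsa] at h2
        exact absurd h2 (not_le.mpr hx)
      refine (measure_mono hsub).trans ?_
      set t := -(s / (σ^2 * (1-2*s))) with ht_def
      have hts : t ≤ 0 := by
        rw [ht_def, neg_nonpos]
        exact div_nonneg hs0 (by positivity)
      have h2t : 2*t*σ^2 = -(2*s/(1-2*s)) := by
        rw [ht_def]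
        field_simp
      have h2t' : 2*t*σ^2 < 1 := by
        rw [h2t]
        have : 0 ≤ 2*s/(1-2*s) := div_nonneg (by linarith) h1m.le
        linarith
      have hw : 1 - 2*t*σ^2 = (1-2*s)⁻¹ := by
        rw [h2t]
        field_simp [h1m.ne']
        ring
      rw [ENNReal.le_ofReal_iff_toReal_le (measure_ne_top P _) (Real.exp_nonneg _)]
      refine (chern_low t a hts h2t').trans ?_
      rw [hw, Real.sqrt_inv, inv_inv]
      set r := Real.sqrt (1-2*s) with hr_def
      have hrpos : 0 < r := Real.sqrt_pos.mpr h1m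
      set L := Real.log (1-2*s) with hL_def
      have hlogr : Real.log r = L / 2 := by
        rw [hr_def, Real.log_sqrt h1m.le, hL_def]
      have hsrt : r = Real.exp (L / 2) := by
        rw [← hlogr, Real.exp_log hrpos]
      rw [hsrt, ← Real.exp_nat_mul, ← Real.exp_add, Real.exp_le_exp]
      have hta : -t*a = (n:ℝ) * s := by
        rw [ht_def, ha_def]
        field_simp
        have h' : (1 - s * 2) * (1 - s * 2)⁻¹ = 1 := mul_inv_cancel₀ (by linarith)
        linear_combination (s * ↑n) * h'
      have hlog : L ≤ -(2*s) - (2*s)^2/2 := log_one_sub_le (by linarith) hhalf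
      have key : s + L/2 ≤ -ε := by
        rw [← hse]; nlinarith
      have hmul := mul_le_mul_of_nonneg_left key hnn
      rw [hta]
      nlinarith [hmul]
    · -- 2s ≥ 1 : lower event empty
      have hc10 : c₁ = 0 := by
        rw [hc₁, Real.sqrt_eq_zero_of_nonpos (show (1:ℝ) - 2*s ≤ 0 by linarith), mul_zero]
      have : {x : Fin n → ℝ | Real.sqrt (Z x) < c₁} = ∅ := by
        ext x
        simp only [Set.mem_setOf_eq, Set.mem_empty_iff_false, iff_false, not_lt, hc10]
        exact Real.sqrt_nonneg _
      rw [this, measure_empty]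
      exact zero_le
  -- combine
  have hsplit : P Sᶜ ≤ ENNReal.ofReal (Real.exp (-((n:ℝ)*ε)))
      + ENNReal.ofReal (Real.exp (-((n:ℝ)*ε))) :=
    (measure_mono hcompl).trans ((measure_union_le _ _).trans (add_le_add hL hU))
  rcases le_or_gt (1:ℝ) (2 * Real.exp (-((n:ℝ)*ε))) with hbig | hsmall
  · rw [ENNReal.ofReal_eq_zero.mpr (by linarith)]
    exact zero_le
  · have hofr : ENNReal.ofReal (1 - 2 * Real.exp (-((n:ℝ)*ε)))
        = 1 - ENNReal.ofReal (2 * Real.exp (-((n:ℝ)*ε))) := by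
      rw [ENNReal.ofReal_sub _ (by positivity), ENNReal.ofReal_one]
    have h2e : ENNReal.ofReal (2 * Real.exp (-((n:ℝ)*ε)))
        = ENNReal.ofReal (Real.exp (-((n:ℝ)*ε))) + ENNReal.ofReal (Real.exp (-((n:ℝ)*ε))) := by
      rw [two_mul, ENNReal.ofReal_add (Real.exp_nonneg _) (Real.exp_nonneg _)]
    have hPS : P S = 1 - P Sᶜ := by
      have hadd : P S + P Sᶜ = 1 := by
        rw [measure_add_measure_compl hSm]
        exact measure_univ
      exact ENNReal.eq_sub_of_add_eq (measure_ne_top P _) hadd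
    rw [hofr, h2e, hPS]
    exact tsub_le_tsub_left hsplit 1
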